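/- The proof system EQ∞ is sound and complete for equality of infinite λ-terms: for all prefixed infinite λ-terms ()M and ()N, there exists a completed (possibly infinite) derivation in EQ∞ with conclusion ()M = ()N if and only if M = N (as α-equivalence classes of infinite preterms). -/

import Mathlib

/-- Node labels of (nameless, de Bruijn) infinite λ-terms. -/
inductive Lab : Type
  | lam : Lab
  | app : Lab
  | var : ℕ → Lab
deriving DecidableEq

/-- Which child positions a node with a given label may have. -/
def okChild : Lab → Bool → Prop
  | .lam, false => True
  | .app, _ => True
  | _, _ => False

/-- Infinite λ-terms (in nameless de Bruijn style), represented as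
labelled possibly-infinite binary trees given by their labelling function. -/
structure Tm : Type where
  lab : List Bool → Option Lab
  root : (lab []).isSome
  cons : ∀ p b, (lab (p ++ [b])).isSome ↔ ∃ l, lab p = some l ∧ okChild l b

namespace Tm

/-- Subterm at a position. -/
def sub (t : Tm) (p : List Bool) (h : (t.lab p).isSome) : Tm where
  lab q := t.lab (p ++ q)
  root := by simpa using h
  cons q b := by
    have h' := t.cons (p ++ q) b
    simpa [List.append_assoc] using h'

/-- Auxiliary: number of λ-labels strictly above, accumulating the prefix. -/
def ldepthAux (t : Tm) : List Bool → List Bool → ℕ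
  | _, [] => 0
  | pre, b :: p => (if t.lab pre = some .lam then 1 else 0) + t.ldepthAux (pre ++ [b]) p

/-- The number of λ-nodes strictly above position `p` in `t`. -/
def ldepth (t : Tm) (p : List Bool) : ℕ := t.ldepthAux [] p

end Tm

def shiftLab (σ : ℕ → ℕ) : Lab → Lab
  | .var k => .var (σ k)
  | l => l

theorem okChild_shiftLab (σ : ℕ → ℕ) (l : Lab) (b : Bool) :
    okChild (shiftLab σ l) b ↔ okChild l b := by
  cases l <;> cases b <;> simp [shiftLab, okChild]

/-- Relabel all variable nodes, depending on their λ-depth. -/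
def Tm.mapVar (t : Tm) (σ : ℕ → ℕ → ℕ) : Tm where
  lab p := (t.lab p).map (shiftLab (σ (t.ldepth p)))
  root := by
    have h := t.root
    cases hl : t.lab [] with
    | none => rw [hl] at h; simp at h
    | some l => simp [hl]
  cons p b := by
    constructor
    · intro hs
      have hs' : (t.lab (p ++ [b])).isSome := by simpa using hs
      obtain ⟨l', hl', hok⟩ := (t.cons p b).1 hs'
      exact ⟨shiftLab (σ (t.ldepth p)) l', by simp [hl'],
        (okChild_shiftLab _ _ _).2 hok⟩
    · rintro ⟨l', hl', hok⟩
      obtain ⟨l, hl, hfl⟩ := Option.map_eq_some_iff.mp (by simpa using hl')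
      have hok' : okChild l b := by
        have := hfl ▸ hok
        exact (okChild_shiftLab (σ (t.ldepth p)) l b).1 this
      have hs : (t.lab (p ++ [b])).isSome := (t.cons p b).2 ⟨l, hl, hok'⟩
      simpa using hs

/-- The term consisting of a single variable node with index 0. -/
def var0Tm : Tm where
  lab p := if p = [] then some (.var 0) else none
  root := by simp
  cons p b := by
    constructor
    · intro h
      simp only [List.append_eq_nil_iff] at h
      simp at h
    · rintro ⟨l, hl, hok⟩
      by_cases hp : p = []
      · subst hp
        simp only [if_pos rfl, Option.some.injEq] at hl
        cases hl
        cases b <;> simp [okChild] at hok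
      · simp [hp] at hl

/-- The last-but-`j` abstraction-prefix variable occurs in `t`
(at λ-depth `d` inside the term it has de Bruijn index `j + d`). -/
def OccursJ (j : ℕ) (t : Tm) : Prop := ∃ p, t.lab p = some (.var (j + t.ldepth p))

/-- Remove the prefix variable with base index `j` from the de Bruijn indexing. -/
def downJ (j : ℕ) (t : Tm) : Tm := t.mapVar (fun d k => if j + d < k then k - 1 else k)

/-- The last abstraction-prefix variable occurs. -/
def occurs0 : Tm → Prop := OccursJ 0

/-- Remove the (vacuous) last abstraction-prefix variable. -/
def down0 : Tm → Tm := downJ 0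

/-- `t` has no free variables pointing outside the term itself. -/
def ClosedTm (t : Tm) : Prop := ∀ p k, t.lab p = some (.var k) → k < t.ldepth p

/-- Sequents: a prefix length together with an infinite λ-term. -/
abbrev TSeq : Type := ℕ × Tm

/-- λ-decomposition step of the ARS `Reg⁺`. -/
def SLam (s s' : TSeq) : Prop :=
  s.2.lab [] = some .lam ∧ s'.1 = s.1 + 1 ∧
    ∃ h : (s.2.lab [false]).isSome, s'.2 = s.2.sub [false] h

/-- Left application-decomposition step. -/
def SApp0 (s s' : TSeq) : Prop :=
  s.2.lab [] = some .app ∧ s'.1 = s.1 ∧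
    ∃ h : (s.2.lab [false]).isSome, s'.2 = s.2.sub [false] h

/-- Right application-decomposition step. -/
def SApp1 (s s' : TSeq) : Prop :=
  s.2.lab [] = some .app ∧ s'.1 = s.1 ∧
    ∃ h : (s.2.lab [true]).isSome, s'.2 = s.2.sub [true] h

/-- Vacuous-prefix removal step (removal of the last prefix variable). -/
def SDel (s s' : TSeq) : Prop :=
  s.1 = s'.1 + 1 ∧ ¬ occurs0 s.2 ∧ s'.2 = down0 s.2

/-- The scope⁺-decomposition ARS `Reg⁺` on prefixed infinite λ-terms. -/
def Step (s s' : TSeq) : Prop := SLam s s' ∨ SApp0 s s' ∨ SApp1 s s' ∨ SDel s s'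

/-- A (scope⁺-delimiting) strategy for the ARS `Reg⁺`: a sub-ARS with the
same objects and the same normal forms. -/
def Strategy (S : TSeq → TSeq → Prop) : Prop :=
  (∀ a b, S a b → Step a b) ∧ (∀ a, (∃ b, Step a b) → ∃ b, S a b)

/-- An infinite λ-term is strongly regular if some scope⁺-delimiting strategy
reaches only finitely many sequents from it. -/
def StronglyRegular (M : Tm) : Prop :=
  ∃ S : TSeq → TSeq → Prop, Strategy S ∧ {s | Relation.ReflTransGen S (0, M) s}.Finite

/-- A relation on sequents is *backward-closed* under the rules of the
coinductive proof system `EQ∞`: every related pair of sequents is the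
conclusion of an instance of one of the rules (axiom, λ, @, del) all of whose
premises are again related.  The existence of such a relation containing a
pair is equivalent to the existence of a completed (possibly infinite)
`EQ∞`-derivation of the corresponding equation. -/
def EqInv (R : TSeq → TSeq → Prop) : Prop :=
  ∀ s u, R s u →
    (1 ≤ s.1 ∧ 1 ≤ u.1 ∧ s.2 = var0Tm ∧ u.2 = var0Tm) ∨
    (∃ (ht : (s.2.lab [false]).isSome) (hu : (u.2.lab [false]).isSome),
      s.2.lab [] = some .lam ∧ u.2.lab [] = some .lam ∧
      R (s.1 + 1, s.2.sub [false] ht) (u.1 + 1, u.2.sub [false] hu)) ∨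
    (∃ (ht0 : (s.2.lab [false]).isSome) (ht1 : (s.2.lab [true]).isSome)
       (hu0 : (u.2.lab [false]).isSome) (hu1 : (u.2.lab [true]).isSome),
      s.2.lab [] = some .app ∧ u.2.lab [] = some .app ∧
      R (s.1, s.2.sub [false] ht0) (u.1, u.2.sub [false] hu0) ∧
      R (s.1, s.2.sub [true] ht1) (u.1, u.2.sub [true] hu1)) ∨
    (∃ n m, s.1 = n + 1 ∧ u.1 = m + 1 ∧ ¬ occurs0 s.2 ∧ ¬ occurs0 u.2 ∧
      R (n, down0 s.2) (m, down0 u.2))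

/- ### Auxiliary lemmas -/

theorem Tm.ext' {t u : Tm} (h : ∀ p, t.lab p = u.lab p) : t = u := by
  obtain ⟨lt, rt, ct⟩ := t
  obtain ⟨lu, ru, cu⟩ := u
  have : lt = lu := funext h
  subst this
  rfl

theorem lab_none_append (t : Tm) {p : List Bool} (h : t.lab p = none) :
    ∀ q, t.lab (p ++ q) = none := by
  intro q
  induction q using List.reverseRecOn with
  | nil => simpa using h
  | append_singleton q b ih =>
    rcases hopt : t.lab (p ++ q ++ [b]) with _ | l
    · rw [← List.append_assoc]
      exact hopt
    · exfalso
      have hs : (t.lab (p ++ q ++ [b])).isSome := by rw [hopt]; rfl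
      obtain ⟨l', hl', -⟩ := (t.cons (p ++ q) b).1 hs
      rw [ih] at hl'
      cases hl'

theorem lab_single {t : Tm} {k : ℕ} (h : t.lab [] = some (.var k)) :
    ∀ p, p ≠ [] → t.lab p = none := by
  intro p
  induction p using List.reverseRecOn with
  | nil => intro h'; exact absurd rfl h'
  | append_singleton q b ih =>
    intro _
    rcases hopt : t.lab (q ++ [b]) with _ | l
    · rfl
    · have hs : (t.lab (q ++ [b])).isSome := by simp [hopt]
      obtain ⟨l', hl', hok⟩ := (t.cons q b).1 hs
      by_cases hq : q = []
      · subst hq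
        rw [h] at hl'
        cases hl'
        cases b <;> simp [okChild] at hok
      · rw [ih hq] at hl'
        cases hl'

theorem ldepthAux_sub (t : Tm) (r : List Bool) (h : (t.lab r).isSome) :
    ∀ (p pre : List Bool), (t.sub r h).ldepthAux pre p = t.ldepthAux (r ++ pre) p := by
  intro p
  induction p with
  | nil => intro pre; rfl
  | cons b p ih =>
    intro pre
    simp only [Tm.ldepthAux]
    rw [ih (pre ++ [b])]
    simp [Tm.sub, List.append_assoc]
    rfl

theorem ldepth_cons (t : Tm) (b : Bool) (p : List Bool) (h : (t.lab [b]).isSome) :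
    t.ldepth (b :: p) = (if t.lab [] = some .lam then 1 else 0) + (t.sub [b] h).ldepth p := by
  show t.ldepthAux [] (b :: p) = _
  rw [Tm.ldepthAux, Tm.ldepth, ldepthAux_sub]
  rfl

theorem shiftLab_eq_lam {σ : ℕ → ℕ} {l : Lab} : shiftLab σ l = .lam ↔ l = .lam := by
  cases l <;> simp [shiftLab]

theorem ldepthAux_mapVar (t : Tm) (σ : ℕ → ℕ → ℕ) :
    ∀ p pre, (t.mapVar σ).ldepthAux pre p = t.ldepthAux pre p := by
  intro p
  induction p with
  | nil => intro pre; rfl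
  | cons b p ih =>
    intro pre
    simp only [Tm.ldepthAux, ih]
    congr 1
    show (if (t.lab pre).map (shiftLab (σ (t.ldepth pre))) = some Lab.lam then 1 else 0) = _
    rcases hl : t.lab pre with _ | l
    · simp
    · simp [shiftLab_eq_lam]

theorem ldepth_mapVar (t : Tm) (σ : ℕ → ℕ → ℕ) (p : List Bool) :
    (t.mapVar σ).ldepth p = t.ldepth p := ldepthAux_mapVar t σ p []

theorem ldepthAux_congr (t u : Tm) :
    ∀ (p pre : List Bool),
      (∀ q : List Bool, q.length < p.length → t.lab (pre ++ q) = u.lab (pre ++ q)) →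
      t.ldepthAux pre p = u.ldepthAux pre p := by
  intro p
  induction p with
  | nil => intro pre _; rfl
  | cons b p ih =>
    intro pre h
    simp only [Tm.ldepthAux]
    have h0 : t.lab pre = u.lab pre := by simpa using h [] (by simp)
    rw [h0, ih (pre ++ [b])]
    intro q hq
    have := h (b :: q) (by simpa using Nat.succ_lt_succ hq)
    simpa [List.append_assoc] using this

theorem down0_lab (t : Tm) (p : List Bool) :
    (down0 t).lab p =
      (t.lab p).map (shiftLab (fun k => if 0 + t.ldepth p < k then k - 1 else k)) := rfl

theorem occurs0_def (t : Tm) :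
    occurs0 t ↔ ∃ p, t.lab p = some (.var (0 + t.ldepth p)) := Iff.rfl

theorem down0_inj_at {t u : Tm} (hnt : ¬ occurs0 t) (hnu : ¬ occurs0 u)
    (p : List Bool) (hd : t.ldepth p = u.ldepth p)
    (h : (down0 t).lab p = (down0 u).lab p) : t.lab p = u.lab p := by
  rw [down0_lab, down0_lab, hd] at h
  have ht' : ∀ k, t.lab p = some (Lab.var k) → k ≠ t.ldepth p := by
    rintro k hk hke
    exact hnt ⟨p, by rw [hk, hke]; simp⟩
  have hu' : ∀ k, u.lab p = some (Lab.var k) → k ≠ u.ldepth p := by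
    rintro k hk hke
    exact hnu ⟨p, by rw [hk, hke]; simp⟩
  cases hlt : t.lab p with
  | none =>
    cases hlu : u.lab p with
    | none => rfl
    | some l' => rw [hlt, hlu] at h; simp at h
  | some l =>
    cases hlu : u.lab p with
    | none => rw [hlt, hlu] at h; simp at h
    | some l' =>
      rw [hlt, hlu] at h
      simp only [Option.map_some, Option.some.injEq] at h
      rcases l with _ | _ | k <;> rcases l' with _ | _ | k'
      · rfl
      · exact absurd h (by simp [shiftLab])
      · exact absurd h (by simp [shiftLab])
      · exact absurd h (by simp [shiftLab])
      · rfl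
      · exact absurd h (by simp [shiftLab])
      · exact absurd h (by simp [shiftLab])
      · exact absurd h (by simp [shiftLab])
      · have h1 := ht' k hlt
        have h2 := hu' k' hlu
        rw [hd] at h1
        simp only [shiftLab, Lab.var.injEq] at h
        have hkk : k = k' := by split_ifs at h <;> omega
        rw [hkk]

theorem sound_key (R : TSeq → TSeq → Prop) (hR : EqInv R) :
    ∀ (p : List Bool) (n : ℕ) (t : Tm) (m : ℕ) (u : Tm),
      R (n, t) (m, u) → t.lab p = u.lab p := by
  intro p n t m u hr
  have h := hR (n, t) (m, u) hr
  dsimp only at h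
  rcases h with ⟨-, -, ht, hu⟩ | ⟨ht, hu, hlt, hlu, hr'⟩ |
    ⟨ht0, ht1, hu0, hu1, hlt, hlu, hr0, hr1⟩ | ⟨n', m', hn, hm, hnt, hnu, hr'⟩
  · rw [ht, hu]
  · -- λ rule
    match p with
    | [] => rw [hlt, hlu]
    | true :: q =>
      have h1 : t.lab [true] = none := by
        rcases hh : t.lab [true] with _ | l
        · rfl
        · have hs : (t.lab ([] ++ [true])).isSome := by simp [hh]
          obtain ⟨l', hl', hok⟩ := (t.cons [] true).1 hs
          rw [hlt] at hl'
          cases hl'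
          simp [okChild] at hok
      have h2 : u.lab [true] = none := by
        rcases hh : u.lab [true] with _ | l
        · rfl
        · have hs : (u.lab ([] ++ [true])).isSome := by simp [hh]
          obtain ⟨l', hl', hok⟩ := (u.cons [] true).1 hs
          rw [hlu] at hl'
          cases hl'
          simp [okChild] at hok
      have e1 := lab_none_append t h1 q
      have e2 := lab_none_append u h2 q
      simp only [List.singleton_append] at e1 e2
      rw [e1, e2]
    | false :: q =>
      have := sound_key R hR q (n + 1) (t.sub [false] ht) (m + 1) (u.sub [false] hu) hr'
      simpa [Tm.sub] using this
  · -- @ rule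
    match p with
    | [] => rw [hlt, hlu]
    | false :: q =>
      have := sound_key R hR q n (t.sub [false] ht0) m (u.sub [false] hu0) hr0
      simpa [Tm.sub] using this
    | true :: q =>
      have := sound_key R hR q n (t.sub [true] ht1) m (u.sub [true] hu1) hr1
      simpa [Tm.sub] using this
  · -- del rule
    subst hn
    have hpref : ∀ q : List Bool, q.length < p.length →
        (down0 t).lab q = (down0 u).lab q := by
      intro q hq
      exact sound_key R hR q n' (down0 t) m' (down0 u) hr'
    have hmain : (down0 t).lab p = (down0 u).lab p :=
      sound_key R hR p n' (down0 t) m' (down0 u) hr'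
    have hd : t.ldepth p = u.ldepth p := by
      have h1 := ldepthAux_congr (down0 t) (down0 u) p [] (by simpa using hpref)
      have h2 := ldepthAux_mapVar t (fun d k => if 0 + d < k then k - 1 else k) p []
      have h3 := ldepthAux_mapVar u (fun d k => if 0 + d < k then k - 1 else k) p []
      simp only [down0, downJ] at h1
      show t.ldepthAux [] p = u.ldepthAux [] p
      omega
    exact down0_inj_at hnt hnu p hd hmain
termination_by p n => (p.length, n)
decreasing_by
  · apply Prod.Lex.left; simp
  · apply Prod.Lex.left; simp
  · apply Prod.Lex.left; simp
  · apply Prod.Lex.left; omega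
  · apply Prod.Lex.right; omega

def RelClosed (n : ℕ) (t : Tm) : Prop :=
  ∀ p k, t.lab p = some (.var k) → k < n + t.ldepth p

theorem eqInv_diag :
    EqInv (fun s u => s.1 = u.1 ∧ s.2 = u.2 ∧ RelClosed s.1 s.2) := by
  rintro ⟨n, t⟩ ⟨m, w⟩ ⟨h1, h2, hc⟩
  dsimp only at h1 h2 hc ⊢
  subst h1
  subst h2
  have hroot := t.root
  rcases hl : t.lab [] with _ | l
  · rw [hl] at hroot; simp at hroot
  have hld0 : t.ldepth [] = 0 := rfl
  rcases l with _ | _ | k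
  · -- λ
    have ht : (t.lab [false]).isSome := by
      have := (t.cons [] false).2 ⟨.lam, hl, trivial⟩
      simpa using this
    refine Or.inr (Or.inl ⟨ht, ht, rfl, rfl, rfl, rfl, ?_⟩)
    intro p k hk
    have hk' : t.lab (false :: p) = some (.var k) := hk
    have h := hc _ _ hk'
    rw [ldepth_cons t false p ht, hl] at h
    simp at h
    omega
  · -- @
    have ht0 : (t.lab [false]).isSome := by
      have := (t.cons [] false).2 ⟨.app, hl, trivial⟩
      simpa using this
    have ht1 : (t.lab [true]).isSome := by
      have := (t.cons [] true).2 ⟨.app, hl, trivial⟩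
      simpa using this
    refine Or.inr (Or.inr (Or.inl ⟨ht0, ht1, ht0, ht1, rfl, rfl,
      ⟨rfl, rfl, ?_⟩, ⟨rfl, rfl, ?_⟩⟩))
    · intro p k hk
      have hk' : t.lab (false :: p) = some (.var k) := hk
      have h := hc _ _ hk'
      rw [ldepth_cons t false p ht0, hl] at h
      simp at h
      omega
    · intro p k hk
      have hk' : t.lab (true :: p) = some (.var k) := hk
      have h := hc _ _ hk'
      rw [ldepth_cons t true p ht1, hl] at h
      simp at h
      omega
  · -- var k
    have hkn : k < n := by
      have := hc [] k hl
      rw [hld0] at this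
      omega
    rcases k with _ | j
    · -- axiom
      have htv : t = var0Tm := by
        apply Tm.ext'
        intro p
        by_cases hp : p = []
        · subst hp
          rw [hl]
          simp [var0Tm]
        · rw [lab_single hl p hp]
          simp [var0Tm, hp]
      exact Or.inl ⟨by omega, by omega, htv, htv⟩
    · -- del
      have hocc : ¬ occurs0 t := by
        intro hx
        obtain ⟨p, hp⟩ := (occurs0_def t).1 hx
        by_cases hp0 : p = []
        · subst hp0
          rw [hl, hld0] at hp
          simp at hp
        · rw [lab_single hl p hp0] at hp
          cases hp
      refine Or.inr (Or.inr (Or.inr ⟨n - 1, n - 1, by omega, by omega, hocc, hocc,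
        rfl, rfl, ?_⟩))
      intro p k' hk'
      rw [down0_lab] at hk'
      by_cases hp0 : p = []
      · subst hp0
        rw [hl, hld0] at hk'
        simp only [Option.map_some, shiftLab, Option.some.injEq, Lab.var.injEq] at hk'
        have h0 : (down0 t).ldepth [] = 0 := rfl
        rw [h0]
        split_ifs at hk' <;> omega
      · rw [lab_single hl p hp0] at hk'
        cases hk'

theorem complete_diag (M : Tm) (hM : ClosedTm M) :
    ∃ R : TSeq → TSeq → Prop, EqInv R ∧ R ((0 : ℕ), M) ((0 : ℕ), M) := by
  refine ⟨_, eqInv_diag, rfl, rfl, ?_⟩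
  intro p k hk
  have := hM p k hk
  show k < 0 + M.ldepth p
  omega

/-- The proof system `EQ∞` is sound and complete for
equality of infinite λ-terms: there is a completed (possibly infinite)
`EQ∞`-derivation with conclusion `() M = () N` if and only if `M = N`. -/
theorem stmt11 (M N : Tm) (hM : ClosedTm M) (hN : ClosedTm N) :
    (∃ R : TSeq → TSeq → Prop, EqInv R ∧ R ((0 : ℕ), M) ((0 : ℕ), N)) ↔ M = N := by
  constructor
  · rintro ⟨R, hR, hr⟩
    exact Tm.ext' fun p => sound_key R hR p 0 M 0 N hr
  · rintro rfl
    exact complete_diag M hM
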